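/- Let A be a Banach ring with a continuous action of a profinite group Γ, and let M be a Banach A-module with a semilinear Γ-action by isometries. Equip the continuous cochain complex C^•(Γ, M) with the supremum norm and assume it is uniformly strict exact with constant c. Let L = ⊕_{i=1}^{l} A e_i be a finite free Γ-module over A, equipped with the supremum norm with respect to the basis (e_i). Suppose there exists r > 1 such that |γ(e_i) − e_i| < 1/(r c) for every i and every γ ∈ Γ. Then the complex C^•(Γ, L ⊗_A M) is uniformly strict exact with the same constant c. -/

import Mathlib

open scoped NNReal ENNReal

/-- Inhomogeneous continuous-cochain differential for a group `Γ` acting (via `act`) on an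
abelian group `N`: the usual group-cohomology differential on `C^n(Γ, N)`. -/
def cochainD {Γ N : Type*} [Group Γ] [AddCommGroup N]
    (act : Γ → N → N) (n : ℕ) (f : (Fin n → Γ) → N) :
    (Fin (n + 1) → Γ) → N :=
  fun g => act (g 0) (f fun i => g i.succ) +
    ∑ j : Fin (n + 1), ((-1 : ℤ) ^ ((j : ℕ) + 1)) • f (Fin.contractNth j (· * ·) g)

/-- The supremum norm of a cochain, valued in `ℝ≥0∞`. -/
noncomputable def supNorm {X M : Type*} [SeminormedAddCommGroup M] (f : X → M) : ℝ≥0∞ :=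
  ⨆ x, (‖f x‖₊ : ℝ≥0∞)


open Filter Topology

universe u v

section AlgAux

variable {Γ : Type u} {N : Type v} [Group Γ] [AddCommGroup N]

/-- Build a `MonoidHom` into `AddAut` from a raw action satisfying the action laws. -/
def autOf (T : Γ → N → N)
    (hadd : ∀ γ x y, T γ (x + y) = T γ x + T γ y)
    (hone : ∀ x, T 1 x = x)
    (hmul : ∀ γ γ' x, T (γ * γ') x = T γ (T γ' x)) : Γ →* Multiplicative (AddAut N) where
  toFun γ := Multiplicative.ofAdd
    { toFun := T γ
      invFun := T γ⁻¹
      left_inv := fun x => by rw [← hmul, inv_mul_cancel, hone]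
      right_inv := fun x => by rw [← hmul, mul_inv_cancel, hone]
      map_add' := hadd γ }
  map_one' := AddEquiv.ext fun x => hone x
  map_mul' γ γ' := AddEquiv.ext fun x => hmul γ γ' x

/-- Lift of an additive action to `ULift`s. -/
def uAct (act : Γ →* Multiplicative (AddAut N)) : ULift.{v} Γ →* Multiplicative (AddAut (ULift.{u} N)) where
  toFun γ := Multiplicative.ofAdd ((AddEquiv.ulift.trans ((act γ.down).toAdd)).trans AddEquiv.ulift.symm)
  map_one' := AddEquiv.ext fun x => by
    show ULift.up ((act 1).toAdd x.down) = x
    rw [map_one]; rfl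
  map_mul' γ δ := AddEquiv.ext fun x => by
    show ULift.up ((act (γ.down * δ.down)).toAdd x.down) = _
    rw [map_mul]; rfl

noncomputable local instance uMod : Module (ULift.{max u v} ℤ) (ULift.{u} N) :=
  Module.compHom _ (ULift.ringEquiv.toRingHom : ULift.{max u v} ℤ →+* ℤ)

/-- The lifted action as a representation over `ULift ℤ`. -/
def uRep (act : Γ →* Multiplicative (AddAut N)) :
    Representation (ULift.{max u v} ℤ) (ULift.{v} Γ) (ULift.{u} N) where
  toFun γ :=
    { toFun := (uAct act γ).toAdd
      map_add' := map_add _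
      map_smul' := fun z x => map_zsmul ((uAct act γ).toAdd : ULift.{u} N ≃+ ULift.{u} N) z.down x }
  map_one' := by
    ext x; show (act 1).toAdd x.down = x.down; rw [map_one]; rfl
  map_mul' γ δ := by
    ext x; show (act (γ.down * δ.down)).toAdd x.down = (act γ.down).toAdd ((act δ.down).toAdd x.down)
    rw [map_mul]; rfl

lemma cochainD_eq_d (act : Γ →* Multiplicative (AddAut N)) (n : ℕ) (f : (Fin n → ULift.{v} Γ) → ULift.{u} N) :
    cochainD (fun γ x => (uAct act γ).toAdd x) n f =
      (inhomogeneousCochains.d (Rep.of (uRep act)) n).hom f := rfl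

lemma uAct_dd (act : Γ →* Multiplicative (AddAut N)) (n : ℕ)
    (f : (Fin n → ULift.{v} Γ) → ULift.{u} N) :
    cochainD (fun γ x => (uAct act γ).toAdd x) (n + 1)
      (cochainD (fun γ x => (uAct act γ).toAdd x) n f) = 0 := by
  rw [cochainD_eq_d, cochainD_eq_d]
  have h := groupCohomology.inhomogeneousCochains.d_comp_d n (Rep.of (uRep act))
  have := congrArg (fun φ => φ.hom f) h
  simpa using this

/-- lift of a cochain -/
def uLift {m : ℕ} (f : (Fin m → Γ) → N) : (Fin m → ULift.{v} Γ) → ULift.{u} N :=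
  fun gg => ⟨f fun i => (gg i).down⟩

lemma bridge1 (act : Γ →* Multiplicative (AddAut N)) (n : ℕ) (f : (Fin n → Γ) → N) (g : Fin (n+1) → Γ) :
    cochainD (fun γ x => (act γ).toAdd x) n f g =
      (cochainD (fun γ x => (uAct act γ).toAdd x) n (uLift f) (fun i => ⟨g i⟩)).down := by
  simp only [cochainD]
  have hdown : ∀ a b : ULift.{u} N, (a + b).down = a.down + b.down := fun _ _ => rfl
  rw [hdown]
  congr 1
  have hsum : ∀ w : Fin (n+1) → ULift.{u} N, (∑ j, w j).down = ∑ j, (w j).down := by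
    intro w
    exact map_sum (AddEquiv.ulift.toAddMonoidHom : ULift.{u} N →+ N) w Finset.univ
  rw [hsum]
  refine Finset.sum_congr rfl fun j _ => ?_
  have hco : (fun i => ((Fin.contractNth j (· * ·) (fun i => (⟨g i⟩ : ULift.{v} Γ))) i).down)
      = Fin.contractNth j (· * ·) g := by
    funext i; unfold Fin.contractNth; split_ifs <;> rfl
  have : uLift f (Fin.contractNth j (· * ·) fun i => (⟨g i⟩ : ULift.{v} Γ))
      = (⟨f (Fin.contractNth j (· * ·) g)⟩ : ULift.{u} N) := by
    simp only [uLift, hco]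
  rw [this]
  rfl

lemma bridge2 (act : Γ →* Multiplicative (AddAut N)) (n : ℕ) (f : (Fin n → Γ) → N) :
    uLift (cochainD (fun γ x => (act γ).toAdd x) n f) =
      cochainD (fun γ x => (uAct act γ).toAdd x) n (uLift f) := by
  funext gg
  show (⟨cochainD (fun γ x => (act γ).toAdd x) n f fun i => (gg i).down⟩ : ULift.{u} N) = _
  rw [bridge1 act n f (fun i => (gg i).down)]

/-- `d ∘ d = 0` for the inhomogeneous cochain differential of an additive action. -/
lemma cochainD_dd (act : Γ →* Multiplicative (AddAut N)) (n : ℕ) (f : (Fin n → Γ) → N) :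
    cochainD (fun γ x => (act γ).toAdd x) (n + 1)
      (cochainD (fun γ x => (act γ).toAdd x) n f) = 0 := by
  funext g
  rw [bridge1, bridge2, uAct_dd]
  rfl

lemma cochainD_sub (act : Γ →* Multiplicative (AddAut N)) (n : ℕ) (f g : (Fin n → Γ) → N) :
    cochainD (fun γ x => (act γ).toAdd x) n (f - g) =
      cochainD (fun γ x => (act γ).toAdd x) n f - cochainD (fun γ x => (act γ).toAdd x) n g := by
  funext x
  simp only [cochainD, Pi.sub_apply, map_sub, smul_sub, Finset.sum_sub_distrib]
  abel

lemma cochainD_add (act : Γ →* Multiplicative (AddAut N)) (n : ℕ) (f g : (Fin n → Γ) → N) :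
    cochainD (fun γ x => (act γ).toAdd x) n (f + g) =
      cochainD (fun γ x => (act γ).toAdd x) n f + cochainD (fun γ x => (act γ).toAdd x) n g := by
  funext x
  simp only [cochainD, Pi.add_apply, map_add, smul_add, Finset.sum_add_distrib]
  abel

lemma cochainD_zero (act : Γ →* Multiplicative (AddAut N)) (n : ℕ) :
    cochainD (fun γ x => (act γ).toAdd x) n 0 = 0 := by
  have h := cochainD_add act n 0 0
  simpa using h.symm

end AlgAux

section Tools

variable {M : Type*} [SeminormedAddCommGroup M]

lemma norm_fsum_le_of_le {ι : Type*} (hna : ∀ x y : M, ‖x + y‖ ≤ max ‖x‖ ‖y‖)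
    {s : Finset ι} {f : ι → M} {C : ℝ} (hC : 0 ≤ C) (h : ∀ i ∈ s, ‖f i‖ ≤ C) :
    ‖∑ i ∈ s, f i‖ ≤ C := by
  classical
  induction s using Finset.induction_on with
  | empty => simpa using hC
  | insert a s hni ih =>
      rw [Finset.sum_insert hni]
      refine (hna _ _).trans (max_le (h a (Finset.mem_insert_self a s)) ?_)
      exact ih fun i hi => h i (Finset.mem_insert_of_mem hi)

lemma supNorm_le_iff {X : Type*} {f : X → M} {C : ℝ≥0∞} :
    supNorm f ≤ C ↔ ∀ x, (‖f x‖₊ : ℝ≥0∞) ≤ C := iSup_le_iff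

lemma le_supNorm {X : Type*} (f : X → M) (x : X) : (‖f x‖₊ : ℝ≥0∞) ≤ supNorm f :=
  le_iSup (fun x => ((‖f x‖₊ : ℝ≥0∞))) x

lemma supNorm_add_le_max (hna : ∀ x y : M, ‖x + y‖ ≤ max ‖x‖ ‖y‖)
    {X : Type*} (f g : X → M) :
    supNorm (f + g) ≤ max (supNorm f) (supNorm g) := by
  rw [supNorm_le_iff]
  intro x
  have h2 : (‖f x + g x‖₊ : ℝ≥0∞) ≤ max (‖f x‖₊ : ℝ≥0∞) (‖g x‖₊ : ℝ≥0∞) := by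
    rw [← ENNReal.coe_max]
    exact ENNReal.coe_le_coe.2 (by simpa [← NNReal.coe_le_coe] using hna (f x) (g x))
  exact h2.trans (max_le_max (le_supNorm f x) (le_supNorm g x))

lemma supNorm_sub_le_max (hna : ∀ x y : M, ‖x + y‖ ≤ max ‖x‖ ‖y‖)
    {X : Type*} (f g : X → M) :
    supNorm (f - g) ≤ max (supNorm f) (supNorm g) := by
  have h := supNorm_add_le_max hna f (-g)
  have hneg : supNorm (-g) = supNorm g := by
    simp [supNorm]
  rw [hneg] at h
  simpa [sub_eq_add_neg] using h

lemma supNorm_eq_zero_iff {X : Type*} {f : X → M} : supNorm f = 0 ↔ ∀ x, ‖f x‖ = 0 := by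
  simp only [supNorm, ENNReal.iSup_eq_zero, ENNReal.coe_eq_zero, nnnorm_eq_zero']
  constructor
  · intro h x; simpa using congrArg NNReal.toReal (h x)
  · intro h x; ext; simpa using h x

lemma supNorm_ne_top {X : Type*} [TopologicalSpace X] [CompactSpace X]
    {f : X → M} (hf : Continuous f) : supNorm f ≠ ∞ := by
  rcases isEmpty_or_nonempty X with hX | hX
  · simp [supNorm, iSup_of_empty]
  · obtain ⟨x₀, -, hx₀⟩ := isCompact_univ.exists_isMaxOn (Set.univ_nonempty) (hf.norm.continuousOn)
    refine ne_top_of_le_ne_top (by simp : ((‖f x₀‖₊ : ℝ≥0∞)) ≠ ∞) ?_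
    rw [supNorm_le_iff]
    intro x
    exact ENNReal.coe_le_coe.2 (by simpa [← NNReal.coe_le_coe] using hx₀ (Set.mem_univ x))

lemma pi_nnnorm_le_ennreal {l : ℕ} (w : Fin l → M) {C : ℝ≥0∞}
    (h : ∀ j, (‖w j‖₊ : ℝ≥0∞) ≤ C) : (‖w‖₊ : ℝ≥0∞) ≤ C := by
  by_cases hC : C = ∞
  · simp [hC]
  · lift C to ℝ≥0 using hC
    exact ENNReal.coe_le_coe.2 (pi_nnnorm_le_iff.2 fun j => ENNReal.coe_le_coe.1 (h j))

lemma supNorm_comp_le {X : Type*} {l : ℕ} (u : X → (Fin l → M)) (j : Fin l) :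
    supNorm (fun y => u y j) ≤ supNorm u := by
  refine iSup_le fun y => ?_
  exact (ENNReal.coe_le_coe.2 (nnnorm_le_pi_nnnorm (u y) j)).trans (le_supNorm u y)

end Tools

section Cont

variable {A M : Type*} [NormedCommRing A] [NormedAddCommGroup M] [Module A M]

lemma cont_smul (hMod : ∀ (a : A) (m : M), ‖a • m‖ ≤ ‖a‖ * ‖m‖) :
    Continuous fun p : A × M => p.1 • p.2 := by
  rw [continuous_iff_continuousAt]
  rintro ⟨a, m⟩
  have key : (fun p : A × M => p.1 • p.2)
      = fun p => (p.1 - a) • p.2 + a • (p.2 - m) + a • m := by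
    funext p
    simp only [sub_smul, smul_sub]
    abel
  rw [key]
  have T1 : Tendsto (fun p : A × M => (p.1 - a) • p.2) (𝓝 (a, m)) (𝓝 0) := by
    refine squeeze_zero_norm (a := fun p : A × M => ‖p.1 - a‖ * ‖p.2‖)
      (fun p => hMod (p.1 - a) p.2) ?_
    have : Tendsto (fun p : A × M => ‖p.1 - a‖ * ‖p.2‖) (𝓝 (a, m)) (𝓝 (‖a - a‖ * ‖m‖)) :=
      ((continuous_fst.sub continuous_const).norm.mul continuous_snd.norm).tendsto (a, m)
    simpa using this
  have T2 : Tendsto (fun p : A × M => a • (p.2 - m)) (𝓝 (a, m)) (𝓝 0) := by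
    refine squeeze_zero_norm (a := fun p : A × M => ‖a‖ * ‖p.2 - m‖)
      (fun p => hMod a (p.2 - m)) ?_
    have : Tendsto (fun p : A × M => ‖a‖ * ‖p.2 - m‖) (𝓝 (a, m)) (𝓝 (‖a‖ * ‖m - m‖)) :=
      (continuous_const.mul (continuous_snd.sub continuous_const).norm).tendsto (a, m)
    simpa using this
  have := (T1.add T2).add_const (a • m)
  unfold ContinuousAt
  simpa using this

end Cont

section ContD

variable {Γ N : Type*} [Group Γ] [TopologicalSpace Γ] [IsTopologicalGroup Γ]
  [NormedAddCommGroup N]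

lemma contractNth_continuous {n : ℕ} (j : Fin (n + 1)) :
    Continuous fun g : Fin (n + 1) → Γ => Fin.contractNth j (· * ·) g := by
  refine continuous_pi fun i => ?_
  unfold Fin.contractNth
  split_ifs
  · exact continuous_apply _
  · exact (continuous_apply _).mul (continuous_apply _)
  · exact continuous_apply _

lemma cochainD_continuous (act : Γ → N → N)
    (hact : Continuous fun p : Γ × N => act p.1 p.2) (n : ℕ)
    {f : (Fin n → Γ) → N} (hf : Continuous f) :
    Continuous (cochainD act n f) := by
  unfold cochainD
  refine Continuous.add ?_ ?_
  · have h1 : Continuous fun g : Fin (n+1) → Γ => ((g 0, f fun i => g i.succ) : Γ × N) :=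
      (continuous_apply (0 : Fin (n+1))).prodMk
        (hf.comp (continuous_pi fun i : Fin n => continuous_apply i.succ))
    exact hact.comp h1
  · refine continuous_finset_sum _ fun j _ => ?_
    exact (hf.comp (contractNth_continuous j)).zsmul _

end ContD

section Perturb

variable {Γ N : Type*} [Group Γ] [TopologicalSpace Γ] [IsTopologicalGroup Γ] [CompactSpace Γ]
  [NormedAddCommGroup N] [CompleteSpace N]

theorem perturb
    (hna : ∀ x y : N, ‖x + y‖ ≤ max ‖x‖ ‖y‖)
    (act0 act : Γ →* Multiplicative (AddAut N))
    (h0cont : Continuous fun p : Γ × N => (act0 p.1).toAdd p.2)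
    (hcont : Continuous fun p : Γ × N => (act p.1).toAdd p.2)
    (c q ε : ℝ≥0) (hq : q < 1) (hεc : ε * c ≤ q)
    (hpert : ∀ (γ : Γ) (w : N), (‖(act0 γ).toAdd w - (act γ).toAdd w‖₊ : ℝ≥0∞) ≤ (ε : ℝ≥0∞) * ‖w‖₊)
    (hex0 : ∀ f : (Fin 0 → Γ) → N, Continuous f →
      cochainD (fun γ x => (act0 γ).toAdd x) 0 f = 0 → f = 0)
    (hex : ∀ (n : ℕ) (f : (Fin (n + 1) → Γ) → N), Continuous f →
      cochainD (fun γ x => (act0 γ).toAdd x) (n + 1) f = 0 →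
      ∃ g, Continuous g ∧ cochainD (fun γ x => (act0 γ).toAdd x) n g = f ∧
        supNorm g ≤ (c : ℝ≥0∞) * supNorm f) :
    (∀ f : (Fin 0 → Γ) → N, Continuous f →
      cochainD (fun γ x => (act γ).toAdd x) 0 f = 0 → f = 0) ∧
    (∀ (n : ℕ) (f : (Fin (n + 1) → Γ) → N), Continuous f →
      cochainD (fun γ x => (act γ).toAdd x) (n + 1) f = 0 →
      ∃ g, Continuous g ∧ cochainD (fun γ x => (act γ).toAdd x) n g = f ∧
        supNorm g ≤ (c : ℝ≥0∞) * supNorm f) := by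
  have hq1 : (q : ℝ≥0∞) ≤ 1 := by exact_mod_cast hq.le
  -- difference of the two differentials is small
  have hdiffpt : ∀ (n : ℕ) (u : (Fin n → Γ) → N) (x : Fin (n+1) → Γ),
      (cochainD (fun γ y => (act0 γ).toAdd y) n u - cochainD (fun γ y => (act γ).toAdd y) n u) x
        = (act0 (x 0)).toAdd (u fun i => x i.succ) - (act (x 0)).toAdd (u fun i => x i.succ) := by
    intro n u x
    simp only [Pi.sub_apply, cochainD, add_sub_add_right_eq_sub]
  have hdiff : ∀ (n : ℕ) (u : (Fin n → Γ) → N),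
      supNorm (cochainD (fun γ y => (act0 γ).toAdd y) n u - cochainD (fun γ y => (act γ).toAdd y) n u)
        ≤ (ε : ℝ≥0∞) * supNorm u := by
    intro n u
    rw [supNorm_le_iff]
    intro x
    rw [hdiffpt n u x]
    exact (hpert (x 0) _).trans (mul_le_mul_right (le_supNorm u _) _)
  constructor
  · -- degree 0
    intro f hf hDf
    set e := cochainD (fun γ y => (act0 γ).toAdd y) 0 f with he_def
    have he_eq : e = cochainD (fun γ y => (act0 γ).toAdd y) 0 f
        - cochainD (fun γ y => (act γ).toAdd y) 0 f := by
      rw [hDf, sub_zero]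
    have hen : supNorm e ≤ (ε : ℝ≥0∞) * supNorm f := he_eq ▸ hdiff 0 f
    have hec : Continuous e := cochainD_continuous _ h0cont 0 hf
    have hez : cochainD (fun γ y => (act0 γ).toAdd y) (0 + 1) e = 0 := cochainD_dd act0 0 f
    obtain ⟨h, hhc, hh, hhn⟩ := hex 0 e hec hez
    have h2 : cochainD (fun γ y => (act0 γ).toAdd y) 0 (f - h) = 0 := by
      rw [cochainD_sub, hh, he_def, sub_self]
    have h3 := hex0 (f - h) (hf.sub hhc) h2
    have hfh : f = h := by
      have := sub_eq_zero.mp h3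
      exact this
    have hbound : supNorm f ≤ (q : ℝ≥0∞) * supNorm f := by
      calc supNorm f = supNorm h := by rw [hfh]
        _ ≤ (c : ℝ≥0∞) * supNorm e := hhn
        _ ≤ (c : ℝ≥0∞) * ((ε : ℝ≥0∞) * supNorm f) := mul_le_mul_right hen _
        _ = ((ε * c : ℝ≥0) : ℝ≥0∞) * supNorm f := by
            rw [← mul_assoc, ← ENNReal.coe_mul, mul_comm c ε]
        _ ≤ (q : ℝ≥0∞) * supNorm f := by
            exact mul_le_mul_left (ENNReal.coe_le_coe.2 hεc) _
    have hfin : supNorm f ≠ ∞ := supNorm_ne_top hf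
    have hzero : supNorm f = 0 := by
      by_contra h0
      have hlt : (q : ℝ≥0∞) * supNorm f < 1 * supNorm f := by
        refine ENNReal.mul_lt_mul_left h0 hfin ?_
        exact_mod_cast hq
      rw [one_mul] at hlt
      exact absurd (lt_of_le_of_lt hbound hlt) (lt_irrefl _)
    funext x
    exact norm_eq_zero.mp (supNorm_eq_zero_iff.mp hzero x)
  · -- positive degrees
    intro n f hf hDf
    -- one-step improvement
    have step : ∀ u : (Fin (n+1) → Γ) → N, Continuous u →
        cochainD (fun γ y => (act γ).toAdd y) (n + 1) u = 0 →
        ∃ v, Continuous v ∧ supNorm v ≤ (c : ℝ≥0∞) * supNorm u ∧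
          supNorm (u - cochainD (fun γ y => (act γ).toAdd y) n v) ≤ (q : ℝ≥0∞) * supNorm u := by
      intro u hu hDu
      set e := cochainD (fun γ y => (act0 γ).toAdd y) (n + 1) u with he_def
      have he_eq : e = cochainD (fun γ y => (act0 γ).toAdd y) (n+1) u
          - cochainD (fun γ y => (act γ).toAdd y) (n+1) u := by
        rw [hDu, sub_zero]
      have hen : supNorm e ≤ (ε : ℝ≥0∞) * supNorm u := he_eq ▸ hdiff (n+1) u
      have hec : Continuous e := cochainD_continuous _ h0cont (n+1) hu
      have hez : cochainD (fun γ y => (act0 γ).toAdd y) (n + 1 + 1) e = 0 := cochainD_dd act0 (n+1) u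
      obtain ⟨h, hhc, hh, hhn⟩ := hex (n+1) e hec hez
      have hhn' : supNorm h ≤ (q : ℝ≥0∞) * supNorm u := by
        calc supNorm h ≤ (c : ℝ≥0∞) * supNorm e := hhn
          _ ≤ (c : ℝ≥0∞) * ((ε : ℝ≥0∞) * supNorm u) := mul_le_mul_right hen _
          _ = ((ε * c : ℝ≥0) : ℝ≥0∞) * supNorm u := by
              rw [← mul_assoc, ← ENNReal.coe_mul, mul_comm c ε]
          _ ≤ (q : ℝ≥0∞) * supNorm u := mul_le_mul_left (ENNReal.coe_le_coe.2 hεc) _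
      have hφz : cochainD (fun γ y => (act0 γ).toAdd y) (n + 1) (u - h) = 0 := by
        rw [cochainD_sub, hh, he_def, sub_self]
      have hφn : supNorm (u - h) ≤ supNorm u := by
        refine (supNorm_sub_le_max hna u h).trans (max_le le_rfl ?_)
        exact hhn'.trans (by
          calc (q : ℝ≥0∞) * supNorm u ≤ 1 * supNorm u := mul_le_mul_left hq1 _
            _ = supNorm u := one_mul _)
      obtain ⟨g, hgc, hgD, hgn⟩ := hex n (u - h) (hu.sub hhc) hφz
      refine ⟨g, hgc, hgn.trans (mul_le_mul_right hφn _), ?_⟩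
      have keyeq : u - cochainD (fun γ y => (act γ).toAdd y) n g
          = h + (cochainD (fun γ y => (act0 γ).toAdd y) n g - cochainD (fun γ y => (act γ).toAdd y) n g) := by
        rw [hgD]
        abel
      rw [keyeq]
      refine (supNorm_add_le_max hna _ _).trans (max_le hhn' ?_)
      refine (hdiff n g).trans ?_
      calc (ε : ℝ≥0∞) * supNorm g ≤ (ε : ℝ≥0∞) * ((c : ℝ≥0∞) * supNorm (u - h)) :=
            mul_le_mul_right hgn _
        _ = ((ε * c : ℝ≥0) : ℝ≥0∞) * supNorm (u - h) := by
            rw [← mul_assoc, ← ENNReal.coe_mul]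
        _ ≤ (q : ℝ≥0∞) * supNorm u :=
            mul_le_mul (ENNReal.coe_le_coe.2 hεc) hφn (by positivity) (by positivity)
    -- iterate
    choose V hVc hVn hVstep using step
    have hFne : supNorm f ≠ ∞ := supNorm_ne_top hf
    set F : ℝ≥0 := (supNorm f).toNNReal with hFdef
    have hF : (F : ℝ≥0∞) = supNorm f := ENNReal.coe_toNNReal hFne
    have hCont : ∀ (u : (Fin (n+1) → Γ) → N) (hu : Continuous u)
        (hz : cochainD (fun γ y => (act γ).toAdd y) (n + 1) u = 0),
        Continuous (u - cochainD (fun γ y => (act γ).toAdd y) n (V u hu hz)) :=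
      fun u hu hz => hu.sub (cochainD_continuous _ hcont n (hVc u hu hz))
    have hZ : ∀ (u : (Fin (n+1) → Γ) → N) (hu : Continuous u)
        (hz : cochainD (fun γ y => (act γ).toAdd y) (n + 1) u = 0),
        cochainD (fun γ y => (act γ).toAdd y) (n + 1)
          (u - cochainD (fun γ y => (act γ).toAdd y) n (V u hu hz)) = 0 := by
      intro u hu hz
      rw [cochainD_sub, hz, cochainD_dd, sub_self]
    let S : ℕ → {p : (Fin (n+1) → Γ) → N //
        Continuous p ∧ cochainD (fun γ y => (act γ).toAdd y) (n + 1) p = 0} := fun m =>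
      Nat.rec ⟨f, hf, hDf⟩
        (fun _ p => ⟨p.1 - cochainD (fun γ y => (act γ).toAdd y) n (V p.1 p.2.1 p.2.2),
          hCont p.1 p.2.1 p.2.2, hZ p.1 p.2.1 p.2.2⟩) m
    let G : ℕ → (Fin n → Γ) → N := fun m => V (S m).1 (S m).2.1 (S m).2.2
    have hS0 : (S 0).1 = f := rfl
    have hSrec : ∀ m, (S (m+1)).1 = (S m).1 - cochainD (fun γ y => (act γ).toAdd y) n (G m) :=
      fun m => rfl
    have hGc : ∀ m, Continuous (G m) := fun m => hVc _ _ _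
    have hGn : ∀ m, supNorm (G m) ≤ (c : ℝ≥0∞) * supNorm (S m).1 := fun m => hVn _ _ _
    have hSn' : ∀ m, supNorm ((S (m+1)).1) ≤ (q : ℝ≥0∞) * supNorm ((S m).1) := by
      intro m
      rw [hSrec m]
      exact hVstep _ _ _
    have hSn : ∀ m, supNorm ((S m).1) ≤ ((q : ℝ≥0∞)) ^ m * (F : ℝ≥0∞) := by
      intro m
      induction m with
      | zero => simp [hS0, hF]
      | succ m ih =>
          calc supNorm ((S (m+1)).1) ≤ (q : ℝ≥0∞) * supNorm ((S m).1) := hSn' m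
            _ ≤ (q : ℝ≥0∞) * (((q : ℝ≥0∞)) ^ m * (F : ℝ≥0∞)) := mul_le_mul_right ih _
            _ = ((q : ℝ≥0∞)) ^ (m+1) * (F : ℝ≥0∞) := by ring
    -- pointwise real bounds
    have hGx : ∀ m x, ‖G m x‖ ≤ ((c * F : ℝ≥0) : ℝ) * ((q : ℝ≥0) : ℝ) ^ m := by
      intro m x
      have h1 : (‖G m x‖₊ : ℝ≥0∞) ≤ ((c * F * q ^ m : ℝ≥0) : ℝ≥0∞) := by
        refine (le_supNorm (G m) x).trans ((hGn m).trans ?_)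
        calc (c : ℝ≥0∞) * supNorm ((S m).1)
            ≤ (c : ℝ≥0∞) * (((q : ℝ≥0∞)) ^ m * (F : ℝ≥0∞)) := mul_le_mul_right (hSn m) _
          _ = ((c * F * q ^ m : ℝ≥0) : ℝ≥0∞) := by push_cast; ring
      have h2 : ‖G m x‖₊ ≤ c * F * q ^ m := ENNReal.coe_le_coe.1 h1
      calc ‖G m x‖ = ((‖G m x‖₊ : ℝ≥0) : ℝ) := rfl
        _ ≤ ((c * F * q ^ m : ℝ≥0) : ℝ) := by exact_mod_cast h2
        _ = ((c * F : ℝ≥0) : ℝ) * ((q : ℝ≥0) : ℝ) ^ m := by push_cast; ring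
    have hSx : ∀ m x, ‖(S m).1 x‖ ≤ ((F : ℝ≥0) : ℝ) * ((q : ℝ≥0) : ℝ) ^ m := by
      intro m x
      have h1 : (‖(S m).1 x‖₊ : ℝ≥0∞) ≤ ((F * q ^ m : ℝ≥0) : ℝ≥0∞) := by
        refine (le_supNorm _ x).trans ((hSn m).trans ?_)
        rw [show ((F * q ^ m : ℝ≥0) : ℝ≥0∞) = ((q : ℝ≥0∞)) ^ m * (F : ℝ≥0∞) by push_cast; ring]
      have h2 := ENNReal.coe_le_coe.1 h1
      calc ‖(S m).1 x‖ = ((‖(S m).1 x‖₊ : ℝ≥0) : ℝ) := rfl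
        _ ≤ ((F * q ^ m : ℝ≥0) : ℝ) := by exact_mod_cast h2
        _ = ((F : ℝ≥0) : ℝ) * ((q : ℝ≥0) : ℝ) ^ m := by push_cast; ring
    -- partial sums
    set PS : ℕ → (Fin n → Γ) → N := fun m => ∑ k ∈ Finset.range m, G k with hPSdef
    have hPSapp : ∀ m x, PS m x = ∑ k ∈ Finset.range m, G k x := by
      intro m x
      simp [hPSdef, Finset.sum_apply]
    have hPSc : ∀ m, Continuous (PS m) := by
      intro m
      have : PS m = fun x => ∑ k ∈ Finset.range m, G k x := funext fun x => hPSapp m x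
      rw [this]
      exact continuous_finset_sum _ fun k _ => hGc k
    have hDPS : ∀ m, cochainD (fun γ y => (act γ).toAdd y) n (PS m) = f - (S m).1 := by
      intro m
      induction m with
      | zero =>
          show cochainD (fun γ y => (act γ).toAdd y) n (∑ k ∈ Finset.range 0, G k) = f - (S 0).1
          rw [Finset.range_zero, Finset.sum_empty, cochainD_zero, hS0, sub_self]
      | succ m ih =>
          have hPSs : PS (m+1) = PS m + G m := by
            funext x
            rw [hPSapp, Pi.add_apply, hPSapp, Finset.sum_range_succ]
          rw [hPSs, cochainD_add, ih, hSrec]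
          abel
    -- Cauchy sequences and limit
    have hdistPS : ∀ x m, dist (PS m x) (PS (m+1) x)
        ≤ ((c * F : ℝ≥0) : ℝ) * ((q : ℝ≥0) : ℝ) ^ m := by
      intro x m
      rw [dist_eq_norm, hPSapp, hPSapp, Finset.sum_range_succ]
      have : (∑ k ∈ Finset.range m, G k x) - ((∑ k ∈ Finset.range m, G k x) + G m x)
          = -(G m x) := by abel
      rw [this, norm_neg]
      exact hGx m x
    have hcauchy : ∀ x, CauchySeq fun m => PS m x := fun x =>
      cauchySeq_of_le_geometric _ _ (by exact_mod_cast hq) (hdistPS x)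
    have hglim : ∀ x, ∃ y, Tendsto (fun m => PS m x) atTop (𝓝 y) := fun x =>
      cauchySeq_tendsto_of_complete (hcauchy x)
    choose g hg using hglim
    -- uniform convergence and continuity
    have hqR : ((q : ℝ≥0) : ℝ) < 1 := by exact_mod_cast hq
    have hdistg : ∀ x m, dist (PS m x) (g x)
        ≤ ((c * F : ℝ≥0) : ℝ) * ((q : ℝ≥0) : ℝ) ^ m / (1 - ((q : ℝ≥0) : ℝ)) := fun x m =>
      dist_le_of_le_geometric_of_tendsto _ _ hqR (hdistPS x) (hg x) m
    have hunif : TendstoUniformly (fun m x => PS m x) g atTop := by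
      rw [Metric.tendstoUniformly_iff]
      intro δ hδ
      have hb : Tendsto (fun m : ℕ =>
          ((c * F : ℝ≥0) : ℝ) * ((q : ℝ≥0) : ℝ) ^ m / (1 - ((q : ℝ≥0) : ℝ))) atTop (𝓝 0) := by
        have h1 : Tendsto (fun m : ℕ => ((q : ℝ≥0) : ℝ) ^ m) atTop (𝓝 0) :=
          tendsto_pow_atTop_nhds_zero_of_lt_one (by positivity) hqR
        have h2 := (h1.const_mul (((c * F : ℝ≥0) : ℝ))).div_const (1 - ((q : ℝ≥0) : ℝ))
        simpa using h2
      filter_upwards [hb.eventually_lt_const hδ] with m hm x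
      calc dist (g x) (PS m x) = dist (PS m x) (g x) := dist_comm _ _
        _ ≤ _ := hdistg x m
        _ < δ := hm
    have hgc : Continuous g := hunif.continuous (Frequently.of_forall hPSc)
    -- norm bound for g
    have hgn : supNorm g ≤ (c : ℝ≥0∞) * supNorm f := by
      rw [supNorm_le_iff]
      intro x
      have hbd : ∀ m, ‖PS m x‖ ≤ ((c * F : ℝ≥0) : ℝ) := by
        intro m
        rw [hPSapp]
        refine norm_fsum_le_of_le hna (by positivity) fun k _ => ?_
        refine (hGx k x).trans ?_
        have hpow : ((q : ℝ≥0) : ℝ) ^ k ≤ 1 :=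
          pow_le_one₀ (by positivity) hqR.le
        calc ((c * F : ℝ≥0) : ℝ) * ((q : ℝ≥0) : ℝ) ^ k
            ≤ ((c * F : ℝ≥0) : ℝ) * 1 := by
              exact mul_le_mul_of_nonneg_left hpow (by positivity)
          _ = ((c * F : ℝ≥0) : ℝ) := mul_one _
      have hlim : Tendsto (fun m => ‖PS m x‖) atTop (𝓝 ‖g x‖) :=
        (continuous_norm.tendsto _).comp (hg x)
      have hgle : ‖g x‖ ≤ ((c * F : ℝ≥0) : ℝ) := le_of_tendsto hlim (Eventually.of_forall hbd)
      have : ‖g x‖₊ ≤ c * F := by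
        rw [← NNReal.coe_le_coe]
        simpa using hgle
      calc (‖g x‖₊ : ℝ≥0∞) ≤ ((c * F : ℝ≥0) : ℝ≥0∞) := ENNReal.coe_le_coe.2 this
        _ = (c : ℝ≥0∞) * (F : ℝ≥0∞) := by push_cast; ring
        _ = (c : ℝ≥0∞) * supNorm f := by rw [hF]
    -- the differential of g is f
    refine ⟨g, hgc, ?_, hgn⟩
    funext x
    have cactγ : ∀ γ : Γ, Continuous fun w : N => (act γ).toAdd w := fun γ =>
      hcont.comp (continuous_const.prodMk continuous_id)
    have h1 : Tendsto (fun m => cochainD (fun γ y => (act γ).toAdd y) n (PS m) x) atTop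
        (𝓝 (cochainD (fun γ y => (act γ).toAdd y) n g x)) := by
      simp only [cochainD]
      refine Tendsto.add ?_ ?_
      · exact ((cactγ (x 0)).tendsto _).comp (hg fun i => x i.succ)
      · refine tendsto_finset_sum _ fun j _ => ?_
        exact ((continuous_zsmul _).tendsto _).comp (hg _)
    have h2 : Tendsto (fun m => cochainD (fun γ y => (act γ).toAdd y) n (PS m) x) atTop (𝓝 (f x)) := by
      have heq : (fun m => cochainD (fun γ y => (act γ).toAdd y) n (PS m) x)
          = fun m => f x - (S m).1 x := by
        funext m
        rw [hDPS m]
        rfl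
      rw [heq]
      have hS0' : Tendsto (fun m => (S m).1 x) atTop (𝓝 0) := by
        refine squeeze_zero_norm (fun m => hSx m x) ?_
        have h1' : Tendsto (fun m : ℕ => ((q : ℝ≥0) : ℝ) ^ m) atTop (𝓝 0) :=
          tendsto_pow_atTop_nhds_zero_of_lt_one (by positivity) hqR
        simpa using h1'.const_mul (((F : ℝ≥0) : ℝ))
      simpa using tendsto_const_nhds.sub hS0'
    exact tendsto_nhds_unique h1 h2


end Perturb

/-- Let `A` be a Banach ring with a continuous isometric action of a profinite group `Γ`
(via `σ`), and `M` a nonarchimedean Banach `A`-module with a continuous semilinear isometric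
`Γ`-action `ρ`.  Assume the continuous cochain complex `C^•(Γ, M)` is uniformly strict exact
with constant `c` (including vanishing of `H^0`, i.e. continuous `0`-cocycles are `0`).
Let `L = ⊕_{i=1}^{l} A e_i` be a finite free semilinear `Γ`-module over `A`, the action being
recorded by the matrix coefficients `τ γ i j` of `γ(e_i) = ∑_j (τ γ i j) e_j`, with
`‖γ(e_i) - e_i‖ < 1/(r c)` for some `r > 1`.  Then `C^•(Γ, L ⊗_A M)` — with `L ⊗_A M ≅ M^l`
carrying the sup norm and the diagonal action — is uniformly strict exact with constant `c`. -/
theorem stmt_6 {Γ A M : Type*} [Group Γ] [TopologicalSpace Γ] [IsTopologicalGroup Γ]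
    [CompactSpace Γ] [T2Space Γ] [TotallyDisconnectedSpace Γ]
    [NormedCommRing A] [CompleteSpace A]
    (hnaA : ∀ x y : A, ‖x + y‖ ≤ max ‖x‖ ‖y‖)
    [NormedAddCommGroup M] [CompleteSpace M] [Module A M]
    (hnaM : ∀ x y : M, ‖x + y‖ ≤ max ‖x‖ ‖y‖)
    (hMod : ∀ (a : A) (m : M), ‖a • m‖ ≤ ‖a‖ * ‖m‖)
    (σ : Γ →* RingAut A)
    (hσiso : ∀ (γ : Γ) (a : A), ‖σ γ a‖ = ‖a‖)
    (hσcont : Continuous fun p : Γ × A => σ p.1 p.2)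
    (ρ : Γ →* Multiplicative (AddAut M))
    (hρsemi : ∀ (γ : Γ) (a : A) (m : M), (ρ γ).toAdd (a • m) = σ γ a • (ρ γ).toAdd m)
    (hρiso : ∀ (γ : Γ) (m : M), ‖(ρ γ).toAdd m‖ = ‖m‖)
    (hρcont : Continuous fun p : Γ × M => (ρ p.1).toAdd p.2)
    (c r : ℝ≥0) (hc : 0 < c) (hr : 1 < r)
    (hexact0 : ∀ f : (Fin 0 → Γ) → M, Continuous f →
      cochainD (fun γ m => (ρ γ).toAdd m) 0 f = 0 → f = 0)
    (hexact : ∀ (n : ℕ) (f : (Fin (n + 1) → Γ) → M), Continuous f →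
      cochainD (fun γ m => (ρ γ).toAdd m) (n + 1) f = 0 →
      ∃ g : (Fin n → Γ) → M, Continuous g ∧
        cochainD (fun γ m => (ρ γ).toAdd m) n g = f ∧
        supNorm g ≤ (c : ℝ≥0∞) * supNorm f)
    (l : ℕ) (τ : Γ → Fin l → Fin l → A)
    (hτone : ∀ i j, τ 1 i j = if i = j then (1 : A) else 0)
    (hτmul : ∀ (γ γ' : Γ) (i j : Fin l),
      τ (γ * γ') i j = ∑ k, σ γ (τ γ' i k) * τ γ k j)
    (hτcont : ∀ i j, Continuous fun γ => τ γ i j)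
    (hclose : ∀ (γ : Γ) (i j : Fin l),
      ‖τ γ i j - (if i = j then (1 : A) else 0)‖₊ < 1 / (r * c)) :
    (∀ f : (Fin 0 → Γ) → (Fin l → M), Continuous f →
      cochainD (fun γ w j => ∑ i, τ γ i j • (ρ γ).toAdd (w i)) 0 f = 0 → f = 0) ∧
    (∀ (n : ℕ) (f : (Fin (n + 1) → Γ) → (Fin l → M)), Continuous f →
      cochainD (fun γ w j => ∑ i, τ γ i j • (ρ γ).toAdd (w i)) (n + 1) f = 0 →
      ∃ g : (Fin n → Γ) → (Fin l → M), Continuous g ∧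
        cochainD (fun γ w j => ∑ i, τ γ i j • (ρ γ).toAdd (w i)) n g = f ∧
        supNorm g ≤ (c : ℝ≥0∞) * supNorm f) := by
  classical
  -- the untwisted (diagonal) action and the twisted action on `Fin l → M`
  set T0 : Γ → (Fin l → M) → (Fin l → M) := fun γ w j => (ρ γ).toAdd (w j) with hT0def
  set TT : Γ → (Fin l → M) → (Fin l → M) := fun γ w j => ∑ i, τ γ i j • (ρ γ).toAdd (w i) with hTTdef
  have hT0add : ∀ γ (x y : Fin l → M), T0 γ (x + y) = T0 γ x + T0 γ y := by
    intro γ x y; funext j; simp [hT0def]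
  have hT0one : ∀ x : Fin l → M, T0 1 x = x := by
    intro x; funext j; simp [hT0def]
  have hT0mul : ∀ γ γ' (x : Fin l → M), T0 (γ * γ') x = T0 γ (T0 γ' x) := by
    intro γ γ' x; funext j; simp [hT0def]
  have hTTadd : ∀ γ (x y : Fin l → M), TT γ (x + y) = TT γ x + TT γ y := by
    intro γ x y; funext j
    simp [hTTdef, smul_add, Finset.sum_add_distrib]
  have hTTone : ∀ x : Fin l → M, TT 1 x = x := by
    intro x; funext j
    simp only [hTTdef, hτone, map_one, toAdd_one, AddAut.zero_apply, ite_smul, one_smul, zero_smul]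
    rw [Finset.sum_ite_eq' Finset.univ j (fun i => x i)]
    simp
  have hTTmul : ∀ γ γ' (x : Fin l → M), TT (γ * γ') x = TT γ (TT γ' x) := by
    intro γ γ' w; funext j
    have hX : ∀ k, (ρ (γ * γ')).toAdd (w k) = (ρ γ).toAdd ((ρ γ').toAdd (w k)) := fun k => by
      rw [map_mul]; rfl
    calc (TT (γ * γ') w) j = ∑ k, (∑ i, σ γ (τ γ' k i) * τ γ i j) • (ρ γ).toAdd ((ρ γ').toAdd (w k)) := by
          refine Finset.sum_congr rfl fun k _ => ?_
          rw [hτmul, hX]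
      _ = ∑ k, ∑ i, (σ γ (τ γ' k i) * τ γ i j) • (ρ γ).toAdd ((ρ γ').toAdd (w k)) :=
          Finset.sum_congr rfl fun k _ => Finset.sum_smul
      _ = ∑ i, ∑ k, (σ γ (τ γ' k i) * τ γ i j) • (ρ γ).toAdd ((ρ γ').toAdd (w k)) := Finset.sum_comm
      _ = (TT γ (TT γ' w)) j := by
          show _ = ∑ i, τ γ i j • (ρ γ).toAdd (∑ k, τ γ' k i • (ρ γ').toAdd (w k))
          refine Finset.sum_congr rfl fun i _ => ?_
          rw [map_sum ((ρ γ).toAdd) (fun k => τ γ' k i • (ρ γ').toAdd (w k)) Finset.univ, Finset.smul_sum]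
          refine Finset.sum_congr rfl fun k _ => ?_
          rw [hρsemi, smul_smul, mul_comm]
  set A0 : Γ →* Multiplicative (AddAut (Fin l → M)) := autOf T0 hT0add hT0one hT0mul with hA0def
  set AT : Γ →* Multiplicative (AddAut (Fin l → M)) := autOf TT hTTadd hTTone hTTmul with hATdef
  -- nonarchimedean triangle inequality on the product
  have hnaP : ∀ x y : Fin l → M, ‖x + y‖ ≤ max ‖x‖ ‖y‖ := by
    intro x y
    refine (pi_norm_le_iff_of_nonneg (le_max_of_le_left (norm_nonneg _))).2 fun j => ?_
    exact (hnaM (x j) (y j)).trans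
      (max_le_max (norm_le_pi_norm x j) (norm_le_pi_norm y j))
  -- continuity of the two actions
  have h0cont : Continuous fun p : Γ × (Fin l → M) => (A0 p.1).toAdd p.2 := by
    refine continuous_pi fun j => ?_
    exact hρcont.comp (continuous_fst.prodMk ((continuous_apply j).comp continuous_snd))
  have hTcont : Continuous fun p : Γ × (Fin l → M) => (AT p.1).toAdd p.2 := by
    refine continuous_pi fun j => ?_
    show Continuous fun p : Γ × (Fin l → M) => ∑ i, τ p.1 i j • (ρ p.1).toAdd (p.2 i)
    refine continuous_finset_sum _ fun i _ => ?_
    exact (cont_smul hMod).comp (((hτcont i j).comp continuous_fst).prodMk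
      (hρcont.comp (continuous_fst.prodMk ((continuous_apply i).comp continuous_snd))))
  -- constants
  set ε : ℝ≥0 := 1 / (r * c) with hεdef
  set qq : ℝ≥0 := r⁻¹ with hqdef
  have hq : qq < 1 := by
    rw [hqdef]
    exact inv_lt_one_of_one_lt₀ hr
  have hεc : ε * c ≤ qq := by
    rw [hεdef, hqdef, one_div, mul_inv, mul_assoc, inv_mul_cancel₀ hc.ne', mul_one]
  -- the perturbation estimate
  have hpert : ∀ (γ : Γ) (w : Fin l → M),
      (‖(A0 γ).toAdd w - (AT γ).toAdd w‖₊ : ℝ≥0∞) ≤ (ε : ℝ≥0∞) * ‖w‖₊ := by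
    intro γ w
    rw [← ENNReal.coe_mul]
    refine ENNReal.coe_le_coe.2 ?_
    refine pi_nnnorm_le_iff.2 fun j => ?_
    have hj : ((A0 γ).toAdd w - (AT γ).toAdd w) j
        = ∑ i, ((if i = j then (1 : A) else 0) - τ γ i j) • (ρ γ).toAdd (w i) := by
      have h1 : ∑ i, ((if i = j then (1 : A) else 0) - τ γ i j) • (ρ γ).toAdd (w i)
          = (∑ i, (if i = j then (1 : A) else 0) • (ρ γ).toAdd (w i)) - ∑ i, τ γ i j • (ρ γ).toAdd (w i) := by
        rw [← Finset.sum_sub_distrib]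
        exact Finset.sum_congr rfl fun i _ => sub_smul _ _ _
      have h2 : ∑ i, (if i = j then (1 : A) else 0) • (ρ γ).toAdd (w i) = (ρ γ).toAdd (w j) := by
        simp only [ite_smul, one_smul, zero_smul]
        rw [Finset.sum_ite_eq' Finset.univ j (fun i => (ρ γ).toAdd (w i))]
        simp
      rw [h1, h2]
      rfl
    rw [← NNReal.coe_le_coe]
    push_cast
    rw [hj]
    refine norm_fsum_le_of_le hnaM (by positivity) fun i _ => ?_
    refine (hMod _ _).trans ?_
    have hτb : ‖(if i = j then (1 : A) else 0) - τ γ i j‖ ≤ (ε : ℝ) := by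
      rw [norm_sub_rev]
      have := (hclose γ i j).le
      rw [← NNReal.coe_le_coe] at this
      simpa [hεdef, coe_nnnorm] using this
    have hwb : ‖(ρ γ).toAdd (w i)‖ ≤ ‖w‖ := by
      rw [hρiso]
      exact norm_le_pi_norm w i
    exact mul_le_mul hτb hwb (norm_nonneg _) (by positivity)
  -- componentwise reduction of the untwisted differential
  have hcomp : ∀ (nn : ℕ) (u : (Fin nn → Γ) → (Fin l → M)) (x : Fin (nn+1) → Γ) (j : Fin l),
      cochainD (fun γ y => (A0 γ).toAdd y) nn u x j
        = cochainD (fun γ m => (ρ γ).toAdd m) nn (fun y => u y j) x := by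
    intro nn u x j
    show (T0 (x 0) (u fun i => x i.succ)
        + ∑ jj : Fin (nn+1), ((-1 : ℤ) ^ ((jj : ℕ) + 1))
          • u (Fin.contractNth jj (· * ·) x)) j = _
    rw [Pi.add_apply, Finset.sum_apply]
    rfl
  -- componentwise exactness for the untwisted action
  have hex0P : ∀ u : (Fin 0 → Γ) → (Fin l → M), Continuous u →
      cochainD (fun γ y => (A0 γ).toAdd y) 0 u = 0 → u = 0 := by
    intro u hu hz
    funext y
    funext j
    have hcj : Continuous fun y => u y j := (continuous_apply j).comp hu
    have hzj : cochainD (fun γ m => (ρ γ).toAdd m) 0 (fun y => u y j) = 0 := by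
      funext x
      rw [← hcomp 0 u x j, hz]
      rfl
    have := hexact0 (fun y => u y j) hcj hzj
    exact congrFun this y
  have hexP : ∀ (nn : ℕ) (u : (Fin (nn + 1) → Γ) → (Fin l → M)), Continuous u →
      cochainD (fun γ y => (A0 γ).toAdd y) (nn + 1) u = 0 →
      ∃ g, Continuous g ∧ cochainD (fun γ y => (A0 γ).toAdd y) nn g = u ∧
        supNorm g ≤ (c : ℝ≥0∞) * supNorm u := by
    intro nn u hu hz
    have hj : ∀ j, ∃ gj, Continuous gj ∧
        cochainD (fun γ m => (ρ γ).toAdd m) nn gj = (fun y => u y j) ∧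
        supNorm gj ≤ (c : ℝ≥0∞) * supNorm (fun y => u y j) := by
      intro j
      refine hexact nn (fun y => u y j) ((continuous_apply j).comp hu) ?_
      funext x
      rw [← hcomp (nn+1) u x j, hz]
      rfl
    choose gs hc1 hc2 hc3 using hj
    refine ⟨fun y j => gs j y, continuous_pi fun j => hc1 j, ?_, ?_⟩
    · funext x
      funext j
      rw [hcomp nn _ x j]
      exact congrFun (hc2 j) x
    · rw [supNorm_le_iff]
      intro x
      refine pi_nnnorm_le_ennreal _ fun j => ?_
      refine (le_supNorm (gs j) x).trans ((hc3 j).trans ?_)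
      exact mul_le_mul_right (supNorm_comp_le u j) _
  -- apply the perturbation theorem
  exact perturb hnaP A0 AT h0cont hTcont c qq ε hq hεc hpert hex0P hexP
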